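/- Let A(λ) = [[λ, λ], [λ²+1, λ²+1]] ∈ M_{2×2}(ℚ[λ]). Then there do not exist an invertible constant matrix P ∈ GL(2, ℚ), an invertible matrix Q(λ) ∈ GL(2, ℚ[λ]), and a polynomial s(λ) ∈ ℚ[λ] such that P·A(λ)·Q(λ) = [[1, 0], [s(λ), 0]]. -/

import Mathlib

open Polynomial

/-- **Example 1.1.** For the singular matrix `A(λ) = [[λ, λ], [λ² + 1, λ² + 1]]` over
`ℚ[λ]` there do not exist an invertible constant matrix `P ∈ GL(2, ℚ)`, an invertible
matrix `Q(λ) ∈ GL(2, ℚ[λ])` and a polynomial `s(λ)` such that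
`P·A(λ)·Q(λ) = [[1, 0], [s(λ), 0]]`. -/
theorem no_triangular_reduction_of_singular_example :
    ¬ ∃ (P : Matrix (Fin 2) (Fin 2) ℚ) (Q : Matrix (Fin 2) (Fin 2) ℚ[X]) (s : ℚ[X]),
      IsUnit P.det ∧ IsUnit Q.det ∧
        P.map Polynomial.C *
          (!![X, X; X ^ 2 + 1, X ^ 2 + 1] : Matrix (Fin 2) (Fin 2) ℚ[X]) * Q =
          !![1, 0; s, 0] := by
  rintro ⟨P, Q, s, hP, hQ, hEq⟩
  have h00 := congrArg (fun M => M 0 0) hEq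
  simp [Matrix.mul_apply, Fin.sum_univ_two, Matrix.map_apply] at h00
  set f : ℚ[X] := C (P 0 0) * X + C (P 0 1) * (X ^ 2 + 1) with hf
  have hu : IsUnit f := IsUnit.of_mul_eq_one (a := f) (Q 0 0 + Q 1 0) (by linear_combination h00)
  have h2 : f.coeff 2 = P 0 1 := by
    simp [hf, coeff_add, coeff_C_mul, coeff_X, coeff_X_pow, coeff_one]
  have h1 : f.coeff 1 = P 0 0 := by
    simp [hf, coeff_add, coeff_C_mul, coeff_X, coeff_X_pow, coeff_one]
  have hd : f.natDegree = 0 := natDegree_eq_zero_of_isUnit hu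
  have hne : f ≠ 0 := hu.ne_zero
  have c2 : f.coeff 2 = 0 := coeff_eq_zero_of_natDegree_lt (by omega)
  have c1 : f.coeff 1 = 0 := coeff_eq_zero_of_natDegree_lt (by omega)
  have : f = 0 := by
    rw [hf, h2.symm.trans c2, h1.symm.trans c1]; simp
  exact hne this
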